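/- Let f : ℕⁿ → ℝ≥0 be subadditive and extend it to ℝ≥0ⁿ by f(r) := f(⌈r⌉) (componentwise ceiling). Then for every r ∈ ℝ≥0ⁿ, the limit f̂(r) = lim_{t→∞} f(t·r)/t exists and is finite. -/

import Mathlib

open Filter Topology

section aux
variable {n : ℕ} {f : (Fin n → ℕ) → ℝ}

lemma aux_smul (hsub : ∀ k m, f (k + m) ≤ f k + f m) (q : ℕ) (k y : Fin n → ℕ) :
    f (q • k + y) ≤ q * f k + f y := by
  induction q with
  | zero => simp
  | succ q ih =>
      have h1 : (q + 1) • k + y = k + (q • k + y) := by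
        rw [succ_nsmul]; abel
      rw [h1]
      calc f (k + (q • k + y)) ≤ f k + f (q • k + y) := hsub _ _
        _ ≤ f k + (q * f k + f y) := by linarith
        _ = (q + 1 : ℕ) * f k + f y := by push_cast; ring

lemma aux_sum (hsub : ∀ k m, f (k + m) ≤ f k + f m) (s : Finset (Fin n))
    (g : Fin n → (Fin n → ℕ)) :
    f (∑ i ∈ s, g i) ≤ f 0 + ∑ i ∈ s, f (g i) := by
  induction s using Finset.induction_on with
  | empty => simp
  | insert _ _ hx ih =>
      rename_i a s'
      rw [Finset.sum_insert hx, Finset.sum_insert hx]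
      calc f (g a + ∑ i ∈ s', g i) ≤ f (g a) + f (∑ i ∈ s', g i) := hsub _ _
        _ ≤ f (g a) + (f 0 + ∑ i ∈ s', f (g i)) := by linarith
        _ = f 0 + (f (g a) + ∑ i ∈ s', f (g i)) := by ring

lemma aux_linear (hf0 : ∀ k, 0 ≤ f k) (hsub : ∀ k m, f (k + m) ≤ f k + f m)
    (m : Fin n → ℕ) :
    f m ≤ ((n : ℝ) + 1) * f 0 + (∑ i, f (Pi.single i 1)) * (∑ i, (m i : ℝ)) := by
  have hdecomp : m = ∑ i, Pi.single i (m i) := by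
    ext j
    simp [Pi.single_apply, Finset.sum_ite_eq]
  have h1 : f m ≤ f 0 + ∑ i, f (Pi.single i (m i)) := by
    have := aux_sum hsub Finset.univ (fun i => Pi.single i (m i))
    rwa [← hdecomp] at this
  set C : ℝ := ∑ i, f (Pi.single i 1) with hC
  have hC0 : 0 ≤ C := Finset.sum_nonneg fun i _ => hf0 _
  have hCi : ∀ i : Fin n, f (Pi.single i 1) ≤ C := fun i =>
    Finset.single_le_sum (f := fun j => f (Pi.single j 1)) (fun j _ => hf0 _)
      (Finset.mem_univ i)
  have h2 : ∀ i : Fin n, f (Pi.single i (m i)) ≤ (m i : ℝ) * C + f 0 := by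
    intro i
    show f (Pi.single i (m i) : Fin n → ℕ) ≤ (m i : ℝ) * C + f 0
    have hs : (Pi.single i (m i) : Fin n → ℕ) = m i • (Pi.single i 1 : Fin n → ℕ) + 0 := by
      ext j
      simp [Pi.single_apply]
    calc f (Pi.single i (m i)) = f (m i • Pi.single i 1 + 0) := by rw [← hs]
      _ ≤ (m i : ℝ) * f (Pi.single i 1) + f 0 := aux_smul hsub _ _ _
      _ ≤ (m i : ℝ) * C + f 0 := by
          have := hCi i
          nlinarith [Nat.cast_nonneg (α := ℝ) (m i)]
  have h3 : ∑ i, f (Pi.single i (m i)) ≤ ∑ i, ((m i : ℝ) * C + f 0) :=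
    Finset.sum_le_sum fun i _ => h2 i
  have h4 : ∑ i, ((m i : ℝ) * C + f 0) = C * (∑ i, (m i : ℝ)) + n * f 0 := by
    rw [Finset.sum_add_distrib, Finset.sum_const, ← Finset.sum_mul]
    simp [mul_comm]
  calc f m ≤ f 0 + ∑ i, f (Pi.single i (m i)) := h1
    _ ≤ f 0 + (C * (∑ i, (m i : ℝ)) + n * f 0) := by rw [← h4]; linarith
    _ = ((n : ℝ) + 1) * f 0 + C * (∑ i, (m i : ℝ)) := by ring

end aux

set_option maxHeartbeats 1000000 in
/-- for a nonnegative subadditive `f : ℕⁿ → ℝ`, extended to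
nonnegative real vectors via componentwise ceilings, the limit
`lim_{t→∞} f(t·r)/t` exists and is finite. -/
theorem stmt1 (n : ℕ) (f : (Fin n → ℕ) → ℝ)
    (hf0 : ∀ k, 0 ≤ f k)
    (hsub : ∀ k m, f (k + m) ≤ f k + f m)
    (r : Fin n → ℝ) (hr : ∀ i, 0 ≤ r i) :
    ∃ L : ℝ, Tendsto (fun t : ℕ => f (fun i => ⌈(t : ℝ) * r i⌉₊) / t)
      atTop (𝓝 L) := by
  classical
  by_cases hex : ∃ i, 0 < r i
  swap
  · -- all r i = 0
    have hr0 : ∀ i, r i = 0 := by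
      intro i
      rcases lt_or_eq_of_le (hr i) with h | h
      · exact absurd ⟨i, h⟩ hex
      · exact h.symm
    refine ⟨0, ?_⟩
    have hke : (fun t : ℕ => f (fun i => ⌈(t : ℝ) * r i⌉₊) / t)
        = fun t : ℕ => f (fun _ => 0) / t := by
      funext t
      congr 1
      congr 1
      funext i
      simp [hr0 i]
    rw [hke]
    exact tendsto_const_div_atTop_nhds_zero_nat _
  obtain ⟨j₀, hj₀⟩ := hex
  set k : ℕ → Fin n → ℕ := fun t i => ⌈(t : ℝ) * r i⌉₊ with hkdef
  set u : ℕ → ℝ := fun t => f (k t) / t with hudef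
  show ∃ L : ℝ, Tendsto u atTop (𝓝 L)
  set S : Finset (Fin n) := Finset.univ.filter (fun i => 0 < r i) with hSdef
  have hmemS : ∀ i, i ∈ S ↔ 0 < r i := by
    intro i; simp [hSdef]
  have hS : S.Nonempty := ⟨j₀, (hmemS j₀).mpr hj₀⟩
  have hnotS : ∀ i, i ∉ S → r i = 0 := by
    intro i hi
    have := (hmemS i).not.mp hi
    linarith [hr i, not_lt.mp this]
  set ρ : ℝ := S.inf' hS r with hρdef
  have hρ : 0 < ρ := (Finset.lt_inf'_iff hS).mpr fun i hi => (hmemS i).mp hi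
  have hρle : ∀ i ∈ S, ρ ≤ r i := fun i hi => Finset.inf'_le r hi
  set R : ℝ := ∑ i, r i with hRdef
  have hR0 : 0 ≤ R := Finset.sum_nonneg fun i _ => hr i
  set B : ℝ := ((n : ℝ) + 1) * f 0 with hBdef
  set C : ℝ := ∑ i, f (Pi.single i 1) with hCdef
  have hB0 : 0 ≤ B := by
    have h := hf0 0
    have hn : (0:ℝ) ≤ (n:ℝ) + 1 := by positivity
    exact mul_nonneg hn h
  have hC0 : 0 ≤ C := Finset.sum_nonneg fun i _ => hf0 _
  have hlin : ∀ m, f m ≤ B + C * ∑ i, (m i : ℝ) := fun m => aux_linear hf0 hsub m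
  have hk_ge : ∀ (t : ℕ) (i : Fin n), (t : ℝ) * r i ≤ k t i := fun t i => Nat.le_ceil _
  have hk_le : ∀ (t : ℕ) (i : Fin n), (k t i : ℝ) ≤ t * r i + 1 := by
    intro t i
    exact (Nat.ceil_lt_add_one (mul_nonneg (Nat.cast_nonneg t) (hr i))).le
  have hksum : ∀ t : ℕ, ∑ i, (k t i : ℝ) ≤ t * R + n := by
    intro t
    calc ∑ i, (k t i : ℝ) ≤ ∑ i, ((t : ℝ) * r i + 1) :=
          Finset.sum_le_sum fun i _ => hk_le t i
      _ = t * R + n := by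
          rw [Finset.sum_add_distrib, ← Finset.mul_sum]
          simp [hRdef]
  -- boundedness of u
  have hu0 : ∀ t, 0 ≤ u t := fun t => div_nonneg (hf0 _) (Nat.cast_nonneg t)
  have hub : ∀ t : ℕ, u t ≤ B + C * R + C * n := by
    intro t
    rcases Nat.eq_zero_or_pos t with ht | ht
    · subst ht
      simp only [hudef, Nat.cast_zero, div_zero]
      have := mul_nonneg hC0 hR0
      have hn0 : (0:ℝ) ≤ (n:ℝ) := Nat.cast_nonneg n
      nlinarith
    · have ht1 : (1 : ℝ) ≤ (t : ℝ) := by exact_mod_cast ht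
      have htpos : (0 : ℝ) < (t : ℝ) := by linarith
      have h1 : f (k t) ≤ B + C * (t * R + n) := by
        calc f (k t) ≤ B + C * ∑ i, (k t i : ℝ) := hlin _
          _ ≤ B + C * (t * R + n) := by
              have := mul_le_mul_of_nonneg_left (hksum t) hC0
              linarith
      rw [hudef]
      rw [div_le_iff₀ htpos]
      have hCR : 0 ≤ C * R := mul_nonneg hC0 hR0
      have hCn : 0 ≤ C * n := mul_nonneg hC0 (Nat.cast_nonneg n)
      nlinarith
  have hBddAbove : IsBoundedUnder (· ≤ ·) atTop u := isBoundedUnder_of ⟨_, hub⟩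
  have hBddBelow : IsBoundedUnder (· ≥ ·) atTop u := isBoundedUnder_of ⟨0, hu0⟩
  have hCob_le : IsCoboundedUnder (· ≤ ·) atTop u := hBddBelow.isCoboundedUnder_le
  have hCob_ge : IsCoboundedUnder (· ≥ ·) atTop u := hBddAbove.isCoboundedUnder_ge
  set D : ℝ := C * R / ρ with hDdef
  have hD0 : 0 ≤ D := div_nonneg (mul_nonneg hC0 hR0) hρ.le
  -- KEY inequality
  have key : ∀ s : ℕ, 1 ≤ s → limsup u atTop ≤ u s + D / s := by
    intro s hs
    have hs1 : (1 : ℝ) ≤ (s : ℝ) := by exact_mod_cast hs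
    have hspos : (0 : ℝ) < (s : ℝ) := by linarith
    set κ : Fin n → ℕ := k s with hκdef
    have hκ_pos : ∀ i ∈ S, 0 < κ i := by
      intro i hi
      exact Nat.ceil_pos.mpr (mul_pos hspos ((hmemS i).mp hi))
    have hκ_ge : ∀ i, (s : ℝ) * r i ≤ (κ i : ℝ) := fun i => hk_ge s i
    have hκ_le : ∀ i, (κ i : ℝ) ≤ s * r i + 1 := fun i => hk_le s i
    have hκ0 : ∀ i, i ∉ S → κ i = 0 := by
      intro i hi
      have : r i = 0 := hnotS i hi
      simp [hκdef, hkdef, this]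
    set Q : ℕ → ℕ := fun t => S.inf' hS (fun i => k t i / κ i) with hQdef
    have hQκ : ∀ (t : ℕ) (i : Fin n), Q t * κ i ≤ k t i := by
      intro t i
      by_cases hi : i ∈ S
      · calc Q t * κ i ≤ (k t i / κ i) * κ i :=
              Nat.mul_le_mul_right _ (Finset.inf'_le _ hi)
          _ ≤ k t i := Nat.div_mul_le_self _ _
      · simp [hκ0 i hi]
    set E : ℝ := f κ + B + C * (s * R + 2 * n) with hEdef
    set P : ℝ := (s : ℝ) * ρ + 1 with hPdef
    have hPpos : (0 : ℝ) < P := by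
      have := mul_pos hspos hρ
      simp only [hPdef]; linarith
    -- pointwise bound for t ≥ 1
    have hut : ∀ t : ℕ, 1 ≤ t → u t ≤ u s + D / s + E / t := by
      intro t ht
      have ht1 : (1 : ℝ) ≤ (t : ℝ) := by exact_mod_cast ht
      have htpos : (0 : ℝ) < (t : ℝ) := by linarith
      obtain ⟨j, hjS, hjq⟩ := S.exists_mem_eq_inf' hS (fun i => k t i / κ i)
      have hκj : 0 < κ j := hκ_pos j hjS
      have hκjR : (0 : ℝ) < (κ j : ℝ) := by exact_mod_cast hκj
      have hκj1 : (1 : ℝ) ≤ (κ j : ℝ) := by exact_mod_cast hκj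
      have hrj : 0 < r j := (hmemS j).mp hjS
      have hρrj : ρ ≤ r j := hρle j hjS
      -- upper bound on Q t
      have hQup : (Q t : ℝ) ≤ t / s + 1 := by
        have h1 : ((k t j / κ j : ℕ) : ℝ) ≤ (k t j : ℝ) / (κ j : ℝ) := Nat.cast_div_le
        have h2 : (k t j : ℝ) / (κ j : ℝ) ≤ t / s + 1 := by
          rw [div_le_iff₀ hκjR]
          have hts : (t : ℝ) / s * (s : ℝ) = t := div_mul_cancel₀ _ (ne_of_gt hspos)
          have hts0 : (0:ℝ) ≤ (t : ℝ) / s := by positivity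
          have hc1 : (t : ℝ) / s * ((s:ℝ) * r j) ≤ (t : ℝ) / s * κ j :=
            mul_le_mul_of_nonneg_left (hκ_ge j) hts0
          have hc2 : (t : ℝ) / s * ((s:ℝ) * r j) = t * r j := by
            rw [← mul_assoc, hts]
          nlinarith [hk_le t j]
        have hqe : Q t = k t j / κ j := hjq
        calc (Q t : ℝ) = ((k t j / κ j : ℕ) : ℝ) := by rw [hqe]
          _ ≤ (k t j : ℝ) / (κ j : ℝ) := h1
          _ ≤ t / s + 1 := h2
      -- lower bound on Q t
      have hQlo : (t : ℝ) * ρ / P - 1 ≤ (Q t : ℝ) := by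
        have hnat : k t j < κ j * Q t + κ j := by
          have hqe : Q t = k t j / κ j := hjq
          have hd : κ j * Q t + k t j % κ j = k t j := by
            rw [hqe]; exact Nat.div_add_mod _ _
          have hm : k t j % κ j < κ j := Nat.mod_lt _ hκj
          omega
        have hcast : (k t j : ℝ) < (κ j : ℝ) * (Q t : ℝ) + κ j := by exact_mod_cast hnat
        have hden2 : (0:ℝ) < (s : ℝ) * r j + 1 := by
          have := mul_pos hspos hrj; linarith
        have m1 : (t : ℝ) * ρ / P ≤ (t : ℝ) * r j / ((s : ℝ) * r j + 1) := by
          rw [div_le_div_iff₀ hPpos hden2]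
          have : (t:ℝ) * ρ ≤ (t:ℝ) * r j := mul_le_mul_of_nonneg_left hρrj htpos.le
          simp only [hPdef]
          nlinarith
        have m2 : (t : ℝ) * r j / ((s : ℝ) * r j + 1) ≤ (k t j : ℝ) / (κ j : ℝ) := by
          rw [div_le_div_iff₀ hden2 hκjR]
          have h1 : (t:ℝ) * r j ≤ (k t j : ℝ) := hk_ge t j
          have h2 : (κ j : ℝ) ≤ (s:ℝ) * r j + 1 := hκ_le j
          nlinarith [hk_ge t j, mul_nonneg (mul_nonneg htpos.le (hr j)) (by linarith [hκ_le j, hκjR] : (0:ℝ) ≤ (s:ℝ) * r j + 1)]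
        have m3 : (k t j : ℝ) / (κ j : ℝ) ≤ (Q t : ℝ) + 1 := by
          rw [div_le_iff₀ hκjR]
          nlinarith
        linarith
      -- bound on remainder y
      have hy : ∀ i : Fin n, ((k t i - Q t * κ i : ℕ) : ℝ) ≤ t * r i / P + 1 + κ i := by
        intro i
        have hcast : ((k t i - Q t * κ i : ℕ) : ℝ) = (k t i : ℝ) - (Q t : ℝ) * κ i := by
          rw [Nat.cast_sub (hQκ t i)]
          push_cast
          ring
        set W : ℝ := (t : ℝ) * ρ / P with hWdef
        have hW0 : 0 ≤ W := by positivity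
        have hκi0 : (0:ℝ) ≤ (κ i : ℝ) := Nat.cast_nonneg _
        have c1 : W * ((s:ℝ) * r i) ≤ W * (κ i : ℝ) :=
          mul_le_mul_of_nonneg_left (hκ_ge i) hW0
        have c2 : (W - 1) * (κ i : ℝ) ≤ (Q t : ℝ) * κ i :=
          mul_le_mul_of_nonneg_right (by linarith [hQlo]) hκi0
        have c3 : (t:ℝ) * r i - W * ((s:ℝ) * r i) = t * r i / P := by
          simp only [hWdef, hPdef]
          field_simp
          ring
        have c4 : (k t i : ℝ) ≤ t * r i + 1 := hk_le t i
        nlinarith [c1, c2, c3, c4, hcast]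
      -- sum of remainders
      have hysum : ∑ i, ((k t i - Q t * κ i : ℕ) : ℝ) ≤ t * R / P + s * R + 2 * n := by
        calc ∑ i, ((k t i - Q t * κ i : ℕ) : ℝ)
            ≤ ∑ i, ((t:ℝ) * r i / P + 1 + ((s:ℝ) * r i + 1)) := by
              refine Finset.sum_le_sum fun i _ => ?_
              have := hy i
              have := hκ_le i
              linarith
          _ = t * R / P + s * R + 2 * n := by
              rw [Finset.sum_add_distrib, Finset.sum_add_distrib, Finset.sum_add_distrib,
                ← Finset.sum_div, ← Finset.mul_sum, ← Finset.mul_sum]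
              simp [hRdef]
              ring
      -- main decomposition
      have hdecomp : k t = Q t • κ + fun i => k t i - Q t * κ i := by
        funext i
        simp only [Pi.add_apply, Pi.smul_apply, smul_eq_mul]
        have := hQκ t i
        omega
      have hmain : f (k t) ≤ (Q t : ℝ) * f κ + B + C * (t * R / P + s * R + 2 * n) := by
        calc f (k t) = f (Q t • κ + fun i => k t i - Q t * κ i) := by rw [← hdecomp]
          _ ≤ (Q t : ℝ) * f κ + f (fun i => k t i - Q t * κ i) := aux_smul hsub _ _ _
          _ ≤ (Q t : ℝ) * f κ + (B + C * ∑ i, ((k t i - Q t * κ i : ℕ) : ℝ)) := by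
              linarith [hlin (fun i => k t i - Q t * κ i)]
          _ ≤ (Q t : ℝ) * f κ + (B + C * (t * R / P + s * R + 2 * n)) := by
              have := mul_le_mul_of_nonneg_left hysum hC0
              linarith
          _ = (Q t : ℝ) * f κ + B + C * (t * R / P + s * R + 2 * n) := by ring
      -- divide by t
      have hfκ0 : 0 ≤ f κ := hf0 _
      have hmain2 : f (k t) ≤ ((t:ℝ) / s + 1) * f κ + B + C * (t * R / P + s * R + 2 * n) := by
        nlinarith [hQup, hmain]
      have heq : (((t:ℝ) / s + 1) * f κ + B + C * (t * R / P + s * R + 2 * n)) / t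
          = f κ / s + C * R / P + (f κ + B + C * (s * R + 2 * n)) / t := by
        field_simp
        ring
      have hfinal : u t ≤ f κ / s + C * R / P + E / t := by
        rw [hudef]
        calc f (k t) / (t:ℝ)
            ≤ (((t:ℝ) / s + 1) * f κ + B + C * (t * R / P + s * R + 2 * n)) / t := by
              exact div_le_div_of_nonneg_right hmain2 htpos.le
          _ = f κ / s + C * R / P + E / t := by rw [heq, hEdef]
      have hCRP : C * R / P ≤ D / s := by
        have h1 : D / s = C * R / (ρ * s) := by
          rw [hDdef, div_div]
        rw [h1]
        apply div_le_div_of_nonneg_left (mul_nonneg hC0 hR0) ?_ ?_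
        · exact mul_pos hρ hspos
        · simp only [hPdef]; nlinarith
      have hus : u s = f κ / s := by rw [hudef]
      linarith [hfinal, hCRP]
    -- pass to limsup
    have hv : Tendsto (fun t : ℕ => u s + D / s + E / t) atTop (𝓝 (u s + D / s)) := by
      have h0 := tendsto_const_div_atTop_nhds_zero_nat E
      have := (tendsto_const_nhds (x := u s + D / s) (f := atTop (α := ℕ))).add h0
      simpa using this
    calc limsup u atTop ≤ limsup (fun t : ℕ => u s + D / s + E / t) atTop := by
          apply limsup_le_limsup ?_ hCob_le hv.isBoundedUnder_le
          filter_upwards [eventually_ge_atTop 1] with t ht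
          exact hut t ht
      _ = u s + D / s := hv.limsup_eq
  -- conclude limsup ≤ liminf
  have hmainineq : limsup u atTop ≤ liminf u atTop := by
    apply le_of_forall_sub_le
    intro ε hε
    have h1 : ∀ᶠ s : ℕ in atTop, D / (s : ℝ) < ε :=
      (tendsto_const_div_atTop_nhds_zero_nat D).eventually (eventually_lt_nhds hε)
    have h2 : ∀ᶠ s : ℕ in atTop, limsup u atTop - ε ≤ u s := by
      filter_upwards [h1, eventually_ge_atTop 1] with s hd h1s
      have := key s h1s
      linarith
    exact le_liminf_of_le hCob_ge h2
  exact ⟨limsup u atTop, tendsto_of_le_liminf_of_limsup_le hmainineq le_rfl hBddAbove hBddBelow⟩
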